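/- Assume ℙ(S_F) = 1. Then for every Borel probability measure μ on Σ_k × M with marginal ℙ, the sequence F_*^n μ converges weakly to v_ℙ as n → ∞, i.e., ∫ φ d(F_*^n μ) → ∫ φ dv_ℙ for every bounded continuous φ : Σ_k × M → ℝ. -/

import Mathlib

open Set Function Filter Topology MeasureTheory

noncomputable section

/-- The shift map on two-sided sequences. -/
def shiftMap {k : ℕ} (θ : ℤ → Fin k) : ℤ → Fin k := fun i => θ (i + 1)

/-- The step skew product `F(θ, x) = (σ θ, f_{θ₀} x)`. -/
def skewProd {k : ℕ} {M : Type*} (f : Fin k → M → M) :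
    (ℤ → Fin k) × M → (ℤ → Fin k) × M :=
  fun p => (shiftMap p.1, f (p.1 0) p.2)

/-- Backward composition `f_{θ₋₁} ∘ ⋯ ∘ f_{θ₋ₙ}`. -/
def bcomp {k : ℕ} {M : Type*} (f : Fin k → M → M) (θ : ℤ → Fin k) : ℕ → M → M
  | 0 => id
  | n + 1 => bcomp f θ n ∘ f (θ (-((n : ℤ) + 1)))

/-- The spine `I_θ = ⋂_{n ≥ 1} f_{θ₋₁} ∘ ⋯ ∘ f_{θ₋ₙ}(M)`. -/
def spine {k : ℕ} {M : Type*} (f : Fin k → M → M) (θ : ℤ → Fin k) : Set M :=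
  ⋂ n : ℕ, bcomp f θ (n + 1) '' Set.univ

/-- The set of weakly hyperbolic sequences: those `θ` whose spine is a singleton. -/
def weakHyp {k : ℕ} {M : Type*} (f : Fin k → M → M) : Set (ℤ → Fin k) :=
  {θ | ∃ x : M, spine f θ = {x}}

/-- The ω-limit set of a point `z` under iteration of `F`: limits of subsequences
`F^{n_j}(z)` with `n_j → ∞`. -/
def omegaLim {α : Type*} [TopologicalSpace α] (F : α → α) (z : α) : Set α :=
  {w | ∃ φ : ℕ → ℕ, StrictMono φ ∧ Tendsto (fun j => F^[φ j] z) atTop (𝓝 w)}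

section AuxLemmas
set_option linter.unusedSectionVars false
variable {k : ℕ} {M : Type*} [MetricSpace M] [CompactSpace M] [Nonempty M]
  [MeasurableSpace M] [BorelSpace M] (f : Fin k → M → M)

lemma aux_bcomp_continuous (hf : ∀ i, Continuous (f i)) (θ : ℤ → Fin k) (n : ℕ) :
    Continuous (bcomp f θ n) := by
  induction n with
  | zero => exact continuous_id
  | succ n ih => exact ih.comp (hf _)

lemma aux_bcomp_image_antitone (θ : ℤ → Fin k) :
    Antitone (fun n => bcomp f θ n '' Set.univ) := by
  apply antitone_nat_of_succ_le
  rintro n y ⟨x, -, rfl⟩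
  exact ⟨f (θ (-((n : ℤ) + 1))) x, trivial, rfl⟩

lemma aux_spine_subset (θ : ℤ → Fin k) (n : ℕ) :
    spine f θ ⊆ bcomp f θ (n + 1) '' Set.univ := Set.iInter_subset _ n

lemma aux_bcomp_congr (θ θ' : ℤ → Fin k) (n : ℕ)
    (hθ : ∀ j : ℕ, j < n → θ (-((j : ℤ) + 1)) = θ' (-((j : ℤ) + 1))) :
    bcomp f θ n = bcomp f θ' n := by
  induction n with
  | zero => rfl
  | succ n ih =>
    simp only [bcomp]
    rw [ih (fun j hj => hθ j (hj.trans n.lt_succ_self)), hθ n n.lt_succ_self]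

lemma aux_shift_iter_apply (θ : ℤ → Fin k) (n : ℕ) (i : ℤ) :
    (shiftMap^[n] θ) i = θ (i + n) := by
  induction n generalizing θ i with
  | zero => simp
  | succ n ih =>
    rw [Function.iterate_succ_apply, ih]
    show θ (i + n + 1) = θ (i + (n + 1 : ℕ))
    congr 1
    push_cast
    ring

lemma aux_skew_iter (θ : ℤ → Fin k) (x : M) (n : ℕ) :
    (skewProd f)^[n] (θ, x) = (shiftMap^[n] θ, bcomp f (shiftMap^[n] θ) n x) := by
  induction n generalizing θ x with
  | zero => rfl
  | succ n ih =>
    rw [Function.iterate_succ_apply]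
    show (skewProd f)^[n] (shiftMap θ, f (θ 0) x) = _
    rw [ih, ← Function.iterate_succ_apply]
    refine Prod.ext rfl ?_
    show bcomp f (shiftMap^[n+1] θ) n (f (θ 0) x)
      = bcomp f (shiftMap^[n+1] θ) n (f ((shiftMap^[n+1] θ) (-((n:ℤ)+1))) x)
    rw [aux_shift_iter_apply]
    congr 3
    push_cast
    ring

lemma aux_measurable_shiftMap : Measurable (shiftMap (k := k)) :=
  measurable_pi_lambda _ fun i => measurable_pi_apply (i + 1)

lemma aux_measurable_skewProd (hf : ∀ i, Continuous (f i)) : Measurable (skewProd f) := by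
  apply Measurable.prod
  · exact aux_measurable_shiftMap.comp measurable_fst
  · have h1 : Measurable (fun q : M × Fin k => f q.2 q.1) :=
      measurable_from_prod_countable_left (fun i => (hf i).measurable)
    exact h1.comp (measurable_snd.prodMk ((measurable_pi_apply 0).comp measurable_fst))

lemma aux_measurable_hfun (hk : 1 ≤ k) (n : ℕ) :
    Measurable (fun θ : ℤ → Fin k => Metric.diam (bcomp f θ n '' Set.univ)) := by
  classical
  have key : (fun θ : ℤ → Fin k => Metric.diam (bcomp f θ n '' Set.univ))
      = (fun v : Fin n → Fin k => Metric.diam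
          (bcomp f (fun i : ℤ => if h : (-i - 1).toNat < n ∧ i < 0 then v ⟨(-i - 1).toNat, h.1⟩
            else ⟨0, hk⟩) n '' Set.univ))
        ∘ (fun θ (j : Fin n) => θ (-((j : ℕ) : ℤ) - 1)) := by
    funext θ
    simp only [comp_apply]
    congr 1
    rw [aux_bcomp_congr f]
    intro j hj
    have h2 : (-(-((j:ℤ)+1)) - 1).toNat < n ∧ -((j:ℤ)+1) < 0 := ⟨by omega, by omega⟩
    rw [dif_pos h2]
    congr 1
    omega
  rw [key]
  exact (measurable_of_countable _).comp
    (measurable_pi_lambda _ fun j => measurable_pi_apply _)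

lemma aux_tendsto_diam (hf : ∀ i, Continuous (f i)) (θ : ℤ → Fin k) (x : M)
    (hθ : spine f θ = {x}) :
    Tendsto (fun n => Metric.diam (bcomp f θ n '' Set.univ)) atTop (𝓝 0) := by
  rw [Metric.tendsto_atTop]
  intro ε hε
  have hcs : ∀ m : ℕ, IsCompact (bcomp f θ m '' Set.univ) :=
    fun m => isCompact_univ.image (aux_bcomp_continuous f hf θ m)
  obtain ⟨i, hi⟩ := exists_subset_nhds_of_isCompact'
    (V := fun n : ℕ => bcomp f θ (n + 1) '' Set.univ)
    ((aux_bcomp_image_antitone f θ).comp_monotone (fun _ _ h => Nat.succ_le_succ h)).directed_ge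
    (fun n => hcs (n + 1)) (fun n => (hcs (n + 1)).isClosed)
    (U := Metric.ball x (ε / 3))
    (by intro y hy
        rw [show (⋂ n : ℕ, bcomp f θ (n + 1) '' Set.univ) = spine f θ from rfl, hθ] at hy
        rw [hy]
        exact Metric.ball_mem_nhds x (by linarith))
  refine ⟨i + 1, fun n hn => ?_⟩
  have h1 : Metric.diam (bcomp f θ n '' Set.univ) ≤ Metric.diam (Metric.ball x (ε / 3)) := by
    refine Metric.diam_mono ?_ Metric.isBounded_ball
    exact (aux_bcomp_image_antitone f θ hn).trans hi
  have h2 : Metric.diam (Metric.ball x (ε / 3)) ≤ 2 * (ε / 3) := Metric.diam_ball (by linarith)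
  rw [Real.dist_eq, sub_zero, abs_of_nonneg Metric.diam_nonneg]
  linarith

lemma aux_weakHyp_eq (hf : ∀ i, Continuous (f i)) :
    weakHyp f = {θ : ℤ → Fin k | ∀ m : ℕ, ∃ n : ℕ,
        Metric.diam (bcomp f θ (n + 1) '' Set.univ) < 1 / (m + 1)} := by
  ext θ
  constructor
  · rintro ⟨x, hx⟩ m
    have := aux_tendsto_diam f hf θ x hx
    rw [Metric.tendsto_atTop] at this
    obtain ⟨N, hN⟩ := this (1 / (m + 1)) (by positivity)
    refine ⟨N, ?_⟩
    have := hN (N + 1) (Nat.le_succ N)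
    rwa [Real.dist_eq, sub_zero, abs_of_nonneg Metric.diam_nonneg] at this
  · intro hW
    have hcs : ∀ m : ℕ, IsCompact (bcomp f θ (m + 1) '' Set.univ) :=
      fun m => isCompact_univ.image (aux_bcomp_continuous f hf θ (m + 1))
    obtain ⟨x, hx⟩ := IsCompact.nonempty_iInter_of_directed_nonempty_isCompact_isClosed
      (fun n : ℕ => bcomp f θ (n + 1) '' Set.univ)
      ((aux_bcomp_image_antitone f θ).comp_monotone (fun _ _ h => Nat.succ_le_succ h)).directed_ge
      (fun n => (Set.univ_nonempty).image _)
      (fun n => hcs n) (fun n => (hcs n).isClosed)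
    refine ⟨x, Set.Subset.antisymm ?_ ?_⟩
    · intro y hy
      have hd : ∀ n : ℕ, dist y x ≤ Metric.diam (bcomp f θ (n + 1) '' Set.univ) :=
        fun n => Metric.dist_le_diam_of_mem (hcs n).isBounded
          (Set.mem_iInter.1 hy n) (Set.mem_iInter.1 hx n)
      have h0 : dist y x ≤ 0 := by
        by_contra hc
        push_neg at hc
        obtain ⟨m, hm⟩ := exists_nat_one_div_lt hc
        obtain ⟨n, hn⟩ := hW m
        have := (hd n).trans hn.le
        linarith
      exact dist_eq_zero.1 (le_antisymm h0 dist_nonneg)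
    · rintro y rfl
      exact hx

lemma aux_unif_cont {X : Type*} [TopologicalSpace X] [CompactSpace X]
    (φ : X × M → ℝ) (hφ : Continuous φ) {ε : ℝ} (hε : 0 < ε) :
    ∃ δ > 0, ∀ (θ : X) (a b : M), dist a b < δ → |φ (θ, a) - φ (θ, b)| ≤ ε := by
  set C : Set (X × M × M) := {p | ε ≤ |φ (p.1, p.2.1) - φ (p.1, p.2.2)|} with hC
  have hcont : Continuous fun p : X × M × M => |φ (p.1, p.2.1) - φ (p.1, p.2.2)| := by
    fun_prop
  have hCc : IsCompact C := (isClosed_le continuous_const hcont).isCompact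
  rcases C.eq_empty_or_nonempty with h | h
  · refine ⟨1, one_pos, fun θ a b _ => ?_⟩
    by_contra hc
    push_neg at hc
    exact absurd (show (θ, a, b) ∈ C from hc.le) (by simp [h])
  · obtain ⟨p₀, hp₀, hmin⟩ := hCc.exists_isMinOn h
      (continuous_dist.comp ((continuous_fst.comp continuous_snd).prodMk
        (continuous_snd.comp continuous_snd))).continuousOn
    rw [isMinOn_iff] at hmin
    refine ⟨dist p₀.2.1 p₀.2.2, ?_, fun θ a b hab => ?_⟩
    · rcases (dist_nonneg (x := p₀.2.1) (y := p₀.2.2)).lt_or_eq with h' | h'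
      · exact h'
      · exfalso
        have heq : p₀.2.1 = p₀.2.2 := dist_eq_zero.1 h'.symm
        have := hp₀
        rw [hC] at this
        simp only [Set.mem_setOf_eq, heq, sub_self, abs_zero] at this
        linarith
    · by_contra hc
      push_neg at hc
      have : (θ, a, b) ∈ C := hc.le
      exact absurd (hmin _ this) (not_le.2 hab)

end AuxLemmas

theorem pushforward_tendsto_attracting_measure
    {k : ℕ} (hk : 1 ≤ k) {M : Type*} [MetricSpace M] [CompactSpace M] [Nonempty M]
    [MeasurableSpace M] [BorelSpace M]
    (f : Fin k → M → M) (hf : ∀ i, Continuous (f i))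
    (ℙ : Measure (ℤ → Fin k)) [IsProbabilityMeasure ℙ]
    (hinv : Measure.map shiftMap ℙ = ℙ)
    (hS : ℙ (weakHyp f) = 1)
    (ρ : (ℤ → Fin k) → M) (hρ : ∀ θ ∈ weakHyp f, spine f θ = {ρ θ})
    (hρm : AEMeasurable (fun θ => (θ, ρ θ) : (ℤ → Fin k) → (ℤ → Fin k) × M) ℙ)
    (μ : Measure ((ℤ → Fin k) × M)) [IsProbabilityMeasure μ]
    (hμ : Measure.map Prod.fst μ = ℙ)
    (φ : (ℤ → Fin k) × M → ℝ) (hφb : ∃ Cb, ∀ z, |φ z| ≤ Cb) (hφ : Continuous φ) :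
    Tendsto (fun n : ℕ => ∫ z, φ z ∂ ((Measure.map (skewProd f))^[n] μ)) atTop
      (𝓝 (∫ z, φ z ∂ (Measure.map (fun θ => (θ, ρ θ)) ℙ))) := by
  classical
  obtain ⟨Cb, hCb⟩ := hφb
  have hCb0 : 0 ≤ Cb :=
    le_trans (abs_nonneg _) (hCb ((fun _ => ⟨0, hk⟩), Classical.arbitrary M))
  have hFm : Measurable (skewProd f) := aux_measurable_skewProd f hf
  have hσm : Measurable (shiftMap (k := k)) := aux_measurable_shiftMap
  set h : ℕ → (ℤ → Fin k) → ℝ :=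
    fun n θ => Metric.diam (bcomp f θ n '' Set.univ) with hh
  have hmeas : ∀ n, Measurable (h n) := fun n => aux_measurable_hfun f hk n
  have hnonneg : ∀ n θ, 0 ≤ h n θ := fun n θ => Metric.diam_nonneg
  have hbd : ∀ n θ, h n θ ≤ Metric.diam (Set.univ : Set M) :=
    fun n θ => Metric.diam_mono (Set.subset_univ _) isCompact_univ.isBounded
  -- iterated invariance
  have hinvn : ∀ n : ℕ, Measure.map (shiftMap^[n]) ℙ = ℙ := by
    intro n
    induction n with
    | zero => simp
    | succ n ih =>
      rw [Function.iterate_succ', ← Measure.map_map hσm (hσm.iterate n), ih, hinv]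
  have hmapn : ∀ n : ℕ, (Measure.map (skewProd f))^[n] μ = Measure.map (skewProd f)^[n] μ := by
    intro n
    induction n with
    | zero => simp
    | succ n ih =>
      rw [Function.iterate_succ_apply', ih, Function.iterate_succ',
        ← Measure.map_map hFm (hFm.iterate n)]
  -- weakHyp is measurable of full measure
  have hWmeas : MeasurableSet (weakHyp f) := by
    rw [aux_weakHyp_eq f hf]
    have : {θ : ℤ → Fin k | ∀ m : ℕ, ∃ n : ℕ, h (n + 1) θ < 1 / (m + 1)}
        = ⋂ m : ℕ, ⋃ n : ℕ, (h (n + 1)) ⁻¹' (Set.Iio (1 / (m + 1))) := by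
      ext θ; simp [Set.mem_iInter, Set.mem_iUnion]
    rw [show {θ : ℤ → Fin k | ∀ m : ℕ, ∃ n : ℕ,
        Metric.diam (bcomp f θ (n + 1) '' Set.univ) < 1 / (m + 1)}
      = {θ : ℤ → Fin k | ∀ m : ℕ, ∃ n : ℕ, h (n + 1) θ < 1 / (m + 1)} from rfl, this]
    exact MeasurableSet.iInter fun m => MeasurableSet.iUnion fun n =>
      (hmeas (n + 1)) measurableSet_Iio
  have haeW : ∀ᵐ θ ∂ℙ, θ ∈ weakHyp f := by
    rw [ae_iff]
    have : ℙ (weakHyp f)ᶜ = 0 := by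
      rw [measure_compl hWmeas (measure_ne_top _ _), hS, measure_univ]
      simp
    exact this
  have haeμ : ∀ n : ℕ, ∀ᵐ z : (ℤ → Fin k) × M ∂μ, shiftMap^[n] z.1 ∈ weakHyp f := by
    intro n
    rw [ae_iff]
    have hpre : μ (Prod.fst ⁻¹' (shiftMap^[n] ⁻¹' (weakHyp f)ᶜ)) = 0 := by
      rw [← Measure.map_apply measurable_fst ((hσm.iterate n) hWmeas.compl), hμ,
        ← Measure.map_apply (hσm.iterate n) hWmeas.compl, hinvn n,
        measure_compl hWmeas (measure_ne_top _ _), hS, measure_univ]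
      simp
    exact hpre
  -- convergence of ∫ h n dℙ
  have hInt : Tendsto (fun n => ∫ θ, h n θ ∂ℙ) atTop (𝓝 0) := by
    have := tendsto_integral_of_dominated_convergence (μ := ℙ)
      (F := fun n θ => h n θ) (f := fun _ => (0 : ℝ))
      (bound := fun _ => Metric.diam (Set.univ : Set M))
      (fun n => (hmeas n).aestronglyMeasurable) (integrable_const _)
      (fun n => Filter.Eventually.of_forall fun θ => by
        rw [Real.norm_of_nonneg (hnonneg n θ)]; exact hbd n θ)
      (haeW.mono fun θ hθ => by
        obtain ⟨x, hx⟩ := hθ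
        exact aux_tendsto_diam f hf θ x hx)
    simpa using this
  -- integral identities
  have hφM : Measurable φ := hφ.measurable
  have hA : ∀ n, ∫ z, φ z ∂((Measure.map (skewProd f))^[n] μ)
      = ∫ z, φ ((skewProd f)^[n] z) ∂μ := by
    intro n
    rw [hmapn n, integral_map (hFm.iterate n).aemeasurable hφ.aestronglyMeasurable]
  have hB : ∫ z, φ z ∂(Measure.map (fun θ => (θ, ρ θ)) ℙ) = ∫ θ, φ (θ, ρ θ) ∂ℙ :=
    integral_map hρm hφ.aestronglyMeasurable
  set g : (ℤ → Fin k) → ℝ := fun θ => φ (θ, ρ θ) with hg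
  have hgsm : AEStronglyMeasurable g ℙ := (hφ.measurable.comp_aemeasurable hρm).aestronglyMeasurable
  have hqmp : ∀ n : ℕ, Measure.QuasiMeasurePreserving (shiftMap^[n]) ℙ ℙ :=
    fun n => ⟨hσm.iterate n, by rw [hinvn n]⟩
  have hfstq : Measure.QuasiMeasurePreserving
      (Prod.fst : (ℤ → Fin k) × M → (ℤ → Fin k)) μ ℙ :=
    ⟨measurable_fst, by rw [hμ]⟩
  have hBn : ∀ n : ℕ, ∫ θ, g θ ∂ℙ = ∫ z : (ℤ → Fin k) × M, g (shiftMap^[n] z.1) ∂μ := by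
    intro n
    have h1 : ∫ θ, g θ ∂ℙ = ∫ θ, g (shiftMap^[n] θ) ∂ℙ := by
      conv_lhs => rw [← hinvn n]
      rw [integral_map (hσm.iterate n).aemeasurable (by rw [hinvn n]; exact hgsm)]
    have h2 : ∫ θ, g (shiftMap^[n] θ) ∂ℙ = ∫ z : (ℤ → Fin k) × M, g (shiftMap^[n] z.1) ∂μ := by
      rw [← hμ]
      exact integral_map measurable_fst.aemeasurable
        (by rw [hμ]; exact hgsm.comp_quasiMeasurePreserving (hqmp n))
    rw [h1, h2]
  have hHn : ∀ n : ℕ, ∫ z : (ℤ → Fin k) × M, h n (shiftMap^[n] z.1) ∂μ = ∫ θ, h n θ ∂ℙ := by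
    intro n
    have e1 : ∫ θ, h n (shiftMap^[n] θ) ∂ℙ = ∫ z : (ℤ → Fin k) × M, h n (shiftMap^[n] z.1) ∂μ := by
      rw [← hμ]
      exact integral_map measurable_fst.aemeasurable
        (by rw [hμ]; exact ((hmeas n).comp (hσm.iterate n)).aestronglyMeasurable)
    have e2 : ∫ θ, h n (shiftMap^[n] θ) ∂ℙ = ∫ θ, h n θ ∂ℙ := by
      conv_rhs => rw [← hinvn n]
      rw [integral_map (hσm.iterate n).aemeasurable
        (by rw [hinvn n]; exact (hmeas n).aestronglyMeasurable)]
    rw [← e1, e2]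
  -- integrability
  have hint1 : ∀ n, Integrable (fun z => φ ((skewProd f)^[n] z)) μ := by
    intro n
    refine Integrable.mono' (integrable_const Cb)
      ((hφM.comp (hFm.iterate n)).aestronglyMeasurable)
      (Filter.Eventually.of_forall fun z => ?_)
    rw [Real.norm_eq_abs]; exact hCb _
  have hint2 : ∀ n, Integrable (fun z : (ℤ → Fin k) × M => g (shiftMap^[n] z.1)) μ := by
    intro n
    refine Integrable.mono' (integrable_const Cb)
      ((hgsm.comp_quasiMeasurePreserving (hqmp n)).comp_quasiMeasurePreserving hfstq)
      (Filter.Eventually.of_forall fun z => ?_)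
    rw [Real.norm_eq_abs]; exact hCb _
  have hint3 : ∀ n, Integrable (fun z : (ℤ → Fin k) × M => h n (shiftMap^[n] z.1)) μ := by
    intro n
    refine Integrable.mono' (integrable_const (Metric.diam (Set.univ : Set M)))
      (((hmeas n).comp ((hσm.iterate n).comp measurable_fst)).aestronglyMeasurable)
      (Filter.Eventually.of_forall fun z => ?_)
    rw [Real.norm_of_nonneg (hnonneg n _)]; exact hbd n _
  -- final convergence
  rw [Metric.tendsto_atTop]
  intro ε hε
  obtain ⟨δ, hδ, hδ2⟩ := aux_unif_cont (M := M) (X := ℤ → Fin k) φ hφ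
    (ε := ε / 4) (by linarith)
  set C : ℝ := 2 * Cb / δ with hCdef
  have hC0 : 0 ≤ C := by positivity
  have htend : Tendsto (fun n => C * ∫ θ, h n θ ∂ℙ) atTop (𝓝 0) := by
    simpa using hInt.const_mul C
  rw [Metric.tendsto_atTop] at htend
  obtain ⟨N₁, hN₁⟩ := htend (ε / 2) (by linarith)
  refine ⟨max N₁ 1, fun n hn => ?_⟩
  have hn1 : 1 ≤ n := le_trans (le_max_right _ _) hn
  -- pointwise a.e. bound
  have hpt : ∀ᵐ z : (ℤ → Fin k) × M ∂μ,
      |φ ((skewProd f)^[n] z) - g (shiftMap^[n] z.1)|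
        ≤ ε / 4 + C * h n (shiftMap^[n] z.1) := by
    filter_upwards [haeμ n] with z hz
    obtain ⟨θ, x⟩ := z
    rw [aux_skew_iter]
    have hz' : shiftMap^[n] θ ∈ weakHyp f := hz
    set θ' := shiftMap^[n] θ with hθ'
    set a := bcomp f θ' n x with ha
    have hbK : Bornology.IsBounded (bcomp f θ' n '' Set.univ) :=
      (isCompact_univ.image (aux_bcomp_continuous f hf θ' n)).isBounded
    have hmema : a ∈ bcomp f θ' n '' Set.univ := ⟨x, trivial, rfl⟩
    have hmemb : ρ θ' ∈ bcomp f θ' n '' Set.univ := by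
      obtain ⟨m, rfl⟩ : ∃ m, n = m + 1 := ⟨n - 1, by omega⟩
      have hsp := hρ θ' hz'
      have hmem : ρ θ' ∈ spine f θ' := by rw [hsp]; rfl
      exact aux_spine_subset f θ' m hmem
    have hdista : dist a (ρ θ') ≤ h n θ' := Metric.dist_le_diam_of_mem hbK hmema hmemb
    have hCh : 0 ≤ C * h n θ' := mul_nonneg hC0 (hnonneg n θ')
    by_cases hcase : dist a (ρ θ') < δ
    · have := hδ2 θ' a (ρ θ') hcase
      have hgθ : g θ' = φ (θ', ρ θ') := rfl
      rw [hgθ]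
      linarith
    · push_neg at hcase
      have h1 : |φ (θ', a) - g θ'| ≤ 2 * Cb := by
        calc |φ (θ', a) - g θ'| ≤ |φ (θ', a)| + |g θ'| := abs_sub _ _
        _ ≤ Cb + Cb := add_le_add (hCb _) (hCb _)
        _ = 2 * Cb := by ring
      have h2 : 2 * Cb ≤ C * h n θ' := by
        have hCδ : C * δ = 2 * Cb := by
          rw [hCdef]
          field_simp
        calc 2 * Cb = C * δ := hCδ.symm
        _ ≤ C * dist a (ρ θ') := by
            rcases hC0.lt_or_eq with hC | hC
            · exact (mul_le_mul_iff_right₀ hC).2 hcase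
            · rw [← hC]; simp
        _ ≤ C * h n θ' := by
            rcases hC0.lt_or_eq with hC | hC
            · exact (mul_le_mul_iff_right₀ hC).2 hdista
            · rw [← hC]; simp
      linarith
  -- assemble the estimate
  have hdiff : (∫ z, φ ((skewProd f)^[n] z) ∂μ)
      - (∫ z : (ℤ → Fin k) × M, g (shiftMap^[n] z.1) ∂μ)
      = ∫ z : (ℤ → Fin k) × M, (φ ((skewProd f)^[n] z) - g (shiftMap^[n] z.1)) ∂μ :=
    (integral_sub (hint1 n) (hint2 n)).symm
  have habs : |∫ z : (ℤ → Fin k) × M, (φ ((skewProd f)^[n] z) - g (shiftMap^[n] z.1)) ∂μ|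
      ≤ ∫ z : (ℤ → Fin k) × M, |φ ((skewProd f)^[n] z) - g (shiftMap^[n] z.1)| ∂μ := by
    simpa [Real.norm_eq_abs] using norm_integral_le_integral_norm
      (μ := μ) (fun z : (ℤ → Fin k) × M => φ ((skewProd f)^[n] z) - g (shiftMap^[n] z.1))
  have hmono : ∫ z : (ℤ → Fin k) × M, |φ ((skewProd f)^[n] z) - g (shiftMap^[n] z.1)| ∂μ
      ≤ ∫ z : (ℤ → Fin k) × M, (ε / 4 + C * h n (shiftMap^[n] z.1)) ∂μ :=
    integral_mono_ae ((hint1 n).sub (hint2 n)).abs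
      ((integrable_const _).add ((hint3 n).const_mul C)) hpt
  have hval : ∫ z : (ℤ → Fin k) × M, (ε / 4 + C * h n (shiftMap^[n] z.1)) ∂μ
      = ε / 4 + C * ∫ θ, h n θ ∂ℙ := by
    rw [integral_add (integrable_const _) ((hint3 n).const_mul C), integral_const,
      integral_const_mul, hHn n]
    simp
  rw [Real.dist_eq, hA n, hB]
  have hBg : ∫ θ, φ (θ, ρ θ) ∂ℙ = ∫ z : (ℤ → Fin k) × M, g (shiftMap^[n] z.1) ∂μ := hBn n
  rw [hBg]
  have hfin : |∫ z, φ ((skewProd f)^[n] z) ∂μ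
      - ∫ z : (ℤ → Fin k) × M, g (shiftMap^[n] z.1) ∂μ|
      ≤ ε / 4 + C * ∫ θ, h n θ ∂ℙ := by
    rw [hdiff]
    exact habs.trans (hmono.trans_eq hval)
  have hN := hN₁ n (le_trans (le_max_left _ _) hn)
  rw [Real.dist_eq, sub_zero] at hN
  have hle : C * ∫ θ, h n θ ∂ℙ ≤ |C * ∫ θ, h n θ ∂ℙ| := le_abs_self _
  linarith [abs_lt.1 hN]

end
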